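/- Let (N_j)_{j≥0} be a sequence of nonnegative-integer random variables with N_0 = 1 such that, conditionally on N_j, N_{j+1} stochastically dominates Binomial(N_j · n, δ), where n ∈ ℕ and δ ∈ (0,1) satisfy nδ/2 > 1 and q := 4/(δn) < 1. Then for every j ≥ 1, P(N_j ≥ (δn/2)^j) ≥ ∏_{i=1}^{j} (1 − q^i). -/
import Mathlib


open MeasureTheory
open scoped BigOperators Classical

open Finset Polynomial


noncomputable def bpmf (m : ℕ) (δ : ℝ) (i : ℕ) : ℝ :=
  (Nat.choose m i : ℝ) * δ ^ i * (1 - δ) ^ (m - i)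

lemma bpmf_eval (m i : ℕ) (δ : ℝ) :
    (bernsteinPolynomial ℝ m i).eval δ = bpmf m δ i := by
  simp [bernsteinPolynomial, bpmf]

lemma bpmf_nonneg {m : ℕ} {δ : ℝ} (h0 : 0 ≤ δ) (h1 : δ ≤ 1) (i : ℕ) : 0 ≤ bpmf m δ i := by
  have h2 : (0:ℝ) ≤ 1 - δ := by linarith
  exact mul_nonneg (mul_nonneg (Nat.cast_nonneg _) (pow_nonneg h0 _)) (pow_nonneg h2 _)

lemma bsum0 (m : ℕ) (δ : ℝ) : ∑ i ∈ range (m+1), bpmf m δ i = 1 := by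
  have h := congrArg (Polynomial.eval δ) (bernsteinPolynomial.sum ℝ m)
  simpa [Polynomial.eval_finset_sum, bpmf_eval] using h

lemma bsum1 (m : ℕ) (δ : ℝ) : ∑ i ∈ range (m+1), (i : ℝ) * bpmf m δ i = m * δ := by
  have h := congrArg (Polynomial.eval δ) (bernsteinPolynomial.sum_smul ℝ m)
  simpa [Polynomial.eval_finset_sum, bpmf_eval, mul_comm] using h

lemma bsum2 (m : ℕ) (δ : ℝ) :
    ∑ i ∈ range (m+1), ((i:ℝ)^2 - i) * bpmf m δ i = ((m:ℝ)^2 - m) * δ ^ 2 := by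
  have h := congrArg (Polynomial.eval δ) (bernsteinPolynomial.sum_mul_smul ℝ m)
  simp only [Polynomial.eval_finset_sum, Polynomial.eval_smul, bpmf_eval, nsmul_eq_mul, Polynomial.eval_mul, Polynomial.eval_natCast,
    Polynomial.eval_pow, Polynomial.eval_X] at h
  have hL : ∑ i ∈ range (m+1), ((i:ℝ)^2 - i) * bpmf m δ i
      = ∑ i ∈ range (m+1), ((i * (i-1) : ℕ) : ℝ) * bpmf m δ i := by
    refine Finset.sum_congr rfl ?_
    rintro (_|i) _ <;> · push_cast; ring
  rw [hL, h]
  cases m with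
  | zero => simp
  | succ m' => push_cast; ring

lemma bvar (m : ℕ) (δ : ℝ) :
    ∑ i ∈ range (m+1), bpmf m δ i * ((m:ℝ)*δ - i)^2 = m * δ * (1-δ) := by
  have e : ∀ i ∈ range (m+1), bpmf m δ i * ((m:ℝ)*δ - i)^2
      = ((m:ℝ)*δ)^2 * bpmf m δ i - (2*(m:ℝ)*δ - 1) * ((i:ℝ) * bpmf m δ i)
        + ((i:ℝ)^2 - i) * bpmf m δ i := by
    intro i _; ring
  rw [Finset.sum_congr rfl e]
  rw [Finset.sum_add_distrib, Finset.sum_sub_distrib, ← Finset.mul_sum, ← Finset.mul_sum,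
    bsum0, bsum1, bsum2]
  ring

lemma cheb (m : ℕ) (δ a : ℝ) (h0 : 0 ≤ δ) (h1 : δ ≤ 1) (ha : 0 < (m:ℝ)*δ - a) :
    ∑ i ∈ (range (m+1)).filter (fun i : ℕ => (i:ℝ) < a), bpmf m δ i
      ≤ m * δ * (1-δ) / ((m:ℝ)*δ - a)^2 := by
  set c : ℝ := (m:ℝ)*δ - a with hc
  have hc2 : 0 < c^2 := by positivity
  have step1 : ∑ i ∈ (range (m+1)).filter (fun i : ℕ => (i:ℝ) < a), bpmf m δ i
      ≤ ∑ i ∈ (range (m+1)).filter (fun i : ℕ => (i:ℝ) < a),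
          bpmf m δ i * (((m:ℝ)*δ - i)^2 / c^2) := by
    refine Finset.sum_le_sum ?_
    intro i hi
    simp only [Finset.mem_filter] at hi
    have hia : (i:ℝ) < a := hi.2
    have h2 : c ≤ (m:ℝ)*δ - i := by simp only [hc]; linarith
    have h3 : c^2 ≤ ((m:ℝ)*δ - i)^2 := by nlinarith
    have h4 : (1:ℝ) ≤ ((m:ℝ)*δ - i)^2 / c^2 := (one_le_div hc2).2 h3
    nlinarith [bpmf_nonneg (m := m) h0 h1 i]
  have step2 : ∑ i ∈ (range (m+1)).filter (fun i : ℕ => (i:ℝ) < a),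
          bpmf m δ i * (((m:ℝ)*δ - i)^2 / c^2)
      ≤ ∑ i ∈ range (m+1), bpmf m δ i * (((m:ℝ)*δ - i)^2 / c^2) := by
    refine Finset.sum_le_sum_of_subset_of_nonneg (Finset.filter_subset _ _) ?_
    intro i _ _
    have := bpmf_nonneg (m := m) h0 h1 i
    positivity
  calc _ ≤ _ := step1
    _ ≤ _ := step2
    _ = (∑ i ∈ range (m+1), bpmf m δ i * ((m:ℝ)*δ - i)^2) / c^2 := by
        rw [Finset.sum_div]; exact Finset.sum_congr rfl fun i _ => by ring
    _ = m * δ * (1-δ) / c^2 := by rw [bvar]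

-- scalar bound lemma
lemma Skey (n : ℕ) (δ : ℝ) (hδ0 : 0 < δ) (hδ1 : δ < 1) (hn : 1 < δ * n / 2)
    (j k : ℕ) (hk : (δ * n / 2) ^ j ≤ (k:ℝ)) :
    ∑ i ∈ (range (k*n+1)).filter (fun i : ℕ => (i:ℝ) < (δ * n / 2)^(j+1)), bpmf (k*n) δ i
      ≤ (4 / (δ * n)) ^ (j+1) := by
  set x : ℝ := δ * n with hxdef
  have hx : 2 < x := by linarith
  set a : ℝ := (x/2)^(j+1) with hadef
  have hA : 0 < a := by positivity
  set c : ℝ := ((k*n : ℕ):ℝ) * δ with hcdef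
  have hthresh : (1:ℝ) ≤ (x/2)^j := one_le_pow₀ (by linarith)
  have hc : 2*a ≤ c := by
    have : 2*a = (x/2)^j * x := by rw [hadef, pow_succ]; ring
    rw [this, hcdef]
    push_cast
    calc (x/2)^j * x ≤ (k:ℝ) * x := by
          apply mul_le_mul_of_nonneg_right hk (by linarith)
      _ = (k:ℝ) * (n:ℝ) * δ := by rw [hxdef]; ring
  have hcpos : 0 < c := by linarith
  have hca : 0 < c - a := by linarith
  have h1 := cheb (k*n) δ a (le_of_lt hδ0) (le_of_lt hδ1) (by rw [← hcdef]; linarith)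
  rw [← hcdef] at h1
  have h2 : c*(1-δ)/(c-a)^2 ≤ c/(c-a)^2 := by
    apply div_le_div_of_nonneg_right ?_ (by positivity)
    nlinarith
  have h3 : c/(c-a)^2 ≤ 4/c := by
    rw [div_le_div_iff₀ (by positivity) hcpos]
    nlinarith [sq_nonneg (c - 2*a), mul_nonneg (sub_nonneg.2 hc) hA.le]
  have h4 : (4:ℝ)/c ≤ 2/a := by
    rw [div_le_div_iff₀ hcpos hA]; linarith
  have h5 : (2:ℝ)/a ≤ (4/x)^(j+1) := by
    rw [div_le_iff₀ hA]
    have he : (4/x)^(j+1) * a = 2^(j+1) := by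
      rw [hadef, ← mul_pow]
      congr 1
      field_simp
      ring
    rw [he]
    calc (2:ℝ) = 2^1 := (pow_one 2).symm
      _ ≤ 2^(j+1) := pow_le_pow_right₀ (by norm_num) (Nat.le_add_left 1 j)
  calc _ ≤ c*(1-δ)/(c-a)^2 := h1
    _ ≤ c/(c-a)^2 := h2
    _ ≤ 4/c := h3
    _ ≤ 2/a := h4
    _ ≤ (4/x)^(j+1) := h5

/-- Level-by-level Chebyshev estimate: if `N 0 = 1` and conditionally on
`N j = k`, `N (j+1)` stochastically dominates `Binomial(k·n, δ)`, with
`nδ/2 > 1` and `q = 4/(δn) < 1`, then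
`P(N j ≥ (δn/2)^j) ≥ ∏_{i=1}^j (1 - q^i)`. -/

theorem level_by_level_chebyshev
    {Ω : Type*} [MeasurableSpace Ω] (μ : Measure Ω) [IsProbabilityMeasure μ]
    (N : ℕ → Ω → ℕ) (hmeas : ∀ j, Measurable (N j)) (hN0 : ∀ ω, N 0 ω = 1)
    (n : ℕ) (δ : ℝ) (hδ : δ ∈ Set.Ioo (0 : ℝ) 1)
    (hn : 1 < δ * n / 2) (hq : 4 / (δ * n) < 1)
    (hdom : ∀ j k (a : ℝ),
      μ {ω | N j ω = k ∧ (N (j + 1) ω : ℝ) < a} ≤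
        μ {ω | N j ω = k} *
          ENNReal.ofReal (∑ i ∈ (Finset.range (k * n + 1)).filter
              (fun i : ℕ => (i : ℝ) < a),
            (Nat.choose (k * n) i : ℝ) * δ ^ i * (1 - δ) ^ (k * n - i)))
    (j : ℕ) (hj : 1 ≤ j) :
    ENNReal.ofReal (∏ i ∈ Finset.Icc 1 j, (1 - (4 / (δ * n)) ^ i)) ≤
      μ {ω | (δ * n / 2) ^ j ≤ (N j ω : ℝ)} := by
  obtain ⟨hδ0, hδ1⟩ := hδ
  set q : ℝ := 4 / (δ * n) with hqdef
  have hq0 : 0 < q := by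
    have : (0:ℝ) < δ * n := by linarith
    positivity
  -- the set A j
  set A : ℕ → Set Ω := fun j => {ω | (δ * n / 2) ^ j ≤ (N j ω : ℝ)} with hAdef
  have key : ∀ j, ENNReal.ofReal (∏ i ∈ Finset.Icc 1 j, (1 - q ^ i)) ≤ μ (A j) := by
    intro j
    induction j with
    | zero =>
      have hA0 : A 0 = Set.univ := by ext ω; simp [hAdef, hN0 ω]
      show ENNReal.ofReal (∏ i ∈ Finset.Icc 1 0, (1 - q ^ i)) ≤ μ (A 0)
      rw [hA0, show Finset.Icc 1 0 = ∅ from rfl, Finset.prod_empty, measure_univ]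
      simp
    | succ j ih =>
      set a : ℝ := (δ * n / 2) ^ (j + 1) with hadef
      set B : Set Ω := {ω | (N (j+1) ω : ℝ) < a} with hBdef
      set g : ℕ → Set Ω := fun k => {ω | N j ω = k ∧ (δ * n / 2) ^ j ≤ (k:ℝ)} with hgdef
      -- measurability and disjointness of g
      have hgmeas : ∀ k, MeasurableSet (g k) := by
        intro k
        by_cases h : (δ * n / 2) ^ j ≤ (k:ℝ)
        · have : g k = (N j) ⁻¹' {k} := by ext ω; simp [hgdef, h]
          rw [this]; exact hmeas j (measurableSet_singleton k)
        · have : g k = ∅ := by ext ω; simp [hgdef, h]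
          rw [this]; exact MeasurableSet.empty
      have hgdisj : Pairwise (Function.onFun Disjoint g) := by
        intro k k' hkk'
        simp only [Function.onFun, Set.disjoint_left]
        rintro ω ⟨h1, -⟩ ⟨h2, -⟩
        exact hkk' (h1 ▸ h2.symm ▸ rfl)
      have hgunion : (⋃ k, g k) = A j := by
        ext ω
        simp only [Set.mem_iUnion, hgdef, Set.mem_setOf_eq, hAdef]
        constructor
        · rintro ⟨k, rfl, h⟩; exact h
        · intro h; exact ⟨N j ω, rfl, h⟩
      have hAj : μ (A j) = ∑' k, μ (g k) := by
        rw [← hgunion, measure_iUnion hgdisj hgmeas]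
      -- per-k bound
      have hk_bound : ∀ k, μ (g k ∩ B) ≤ μ (g k) * ENNReal.ofReal (q ^ (j+1)) := by
        intro k
        by_cases h : (δ * n / 2) ^ j ≤ (k:ℝ)
        · have hgk : g k = {ω | N j ω = k} := by ext ω; simp [hgdef, h]
          have hsub : g k ∩ B ⊆ {ω | N j ω = k ∧ (N (j+1) ω : ℝ) < a} := by
            rintro ω ⟨h1, h2⟩
            exact ⟨(hgk ▸ h1 : ω ∈ {ω | N j ω = k}), h2⟩
          calc μ (g k ∩ B) ≤ μ {ω | N j ω = k ∧ (N (j+1) ω : ℝ) < a} := measure_mono hsub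
            _ ≤ μ {ω | N j ω = k} * ENNReal.ofReal
                  (∑ i ∈ (Finset.range (k * n + 1)).filter (fun i : ℕ => (i : ℝ) < a),
                    (Nat.choose (k * n) i : ℝ) * δ ^ i * (1 - δ) ^ (k * n - i)) := hdom j k a
            _ ≤ μ (g k) * ENNReal.ofReal (q ^ (j+1)) := by
                rw [hgk]
                apply mul_le_mul_right
                apply ENNReal.ofReal_le_ofReal
                exact Skey n δ hδ0 hδ1 hn j k h
        · have : g k = ∅ := by ext ω; simp [hgdef, h]
          simp [this]
      -- union bound
      have hAB : μ (A j ∩ B) ≤ μ (A j) * ENNReal.ofReal (q ^ (j+1)) := by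
        have hsub : A j ∩ B ⊆ ⋃ k, (g k ∩ B) := by
          rintro ω ⟨h1, h2⟩
          exact Set.mem_iUnion.2 ⟨N j ω, ⟨rfl, h1⟩, h2⟩
        calc μ (A j ∩ B) ≤ μ (⋃ k, (g k ∩ B)) := measure_mono hsub
          _ ≤ ∑' k, μ (g k ∩ B) := measure_iUnion_le _
          _ ≤ ∑' k, μ (g k) * ENNReal.ofReal (q ^ (j+1)) := ENNReal.tsum_le_tsum hk_bound
          _ = (∑' k, μ (g k)) * ENNReal.ofReal (q ^ (j+1)) := ENNReal.tsum_mul_right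
          _ = μ (A j) * ENNReal.ofReal (q ^ (j+1)) := by rw [hAj]
      -- subadditivity
      have hsplit : μ (A j) ≤ μ (A (j+1)) + μ (A j ∩ B) := by
        have hsub : A j ⊆ A (j+1) ∪ (A j ∩ B) := by
          intro ω hω
          by_cases h : (N (j+1) ω : ℝ) < a
          · exact Or.inr ⟨hω, h⟩
          · exact Or.inl (le_of_not_gt h)
        calc μ (A j) ≤ μ (A (j+1) ∪ (A j ∩ B)) := measure_mono hsub
          _ ≤ μ (A (j+1)) + μ (A j ∩ B) := measure_union_le _ _
      -- pass to reals
      set r : ℝ := (μ (A (j+1))).toReal with hr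
      set s : ℝ := (μ (A j)).toReal with hs
      set t : ℝ := (μ (A j ∩ B)).toReal with ht
      have hfin1 : μ (A (j+1)) ≠ ⊤ := measure_ne_top μ _
      have hfin2 : μ (A j) ≠ ⊤ := measure_ne_top μ _
      have hfin3 : μ (A j ∩ B) ≠ ⊤ := measure_ne_top μ _
      have hsr : s ≤ r + t := by
        have := ENNReal.toReal_mono (by finiteness) hsplit
        rwa [ENNReal.toReal_add hfin1 hfin3] at this
      have hts : t ≤ s * q ^ (j+1) := by
        have := ENNReal.toReal_mono (by finiteness) hAB
        rwa [ENNReal.toReal_mul, ENNReal.toReal_ofReal (by positivity)] at this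
      have hP : (∏ i ∈ Finset.Icc 1 j, (1 - q ^ i)) ≤ s :=
        (ENNReal.ofReal_le_iff_le_toReal hfin2).1 ih
      have hq1 : q ^ (j+1) ≤ 1 := pow_le_one₀ hq0.le hq.le
      have hP0 : 0 ≤ ∏ i ∈ Finset.Icc 1 j, (1 - q ^ i) := by
        apply Finset.prod_nonneg
        intro i hi
        have : q ^ i ≤ 1 := pow_le_one₀ hq0.le hq.le
        linarith
      rw [Finset.prod_Icc_succ_top (Nat.le_add_left 1 j)]
      apply ENNReal.ofReal_le_of_le_toReal
      rw [← hr]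
      nlinarith [hP0, hP, hq1, hsr, hts]
  exact key j
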